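/- arXiv:1404.5534 — 4 statements merged into one kernel-verified Lean document; each statement's English description precedes it below -/
import Mathlib

section
/- For independent nonnegative random variables W, A, B where B is exponentially distributed with rate μ and W, A have Laplace transforms ω(s) = E[e^{-sW}] and α(s) = E[e^{-sA}], the random variable max(0, B - A - W) has Laplace transform 1 - ω(μ)α(μ)(1 - μ/(μ+s)), i.e., E[e^{-s·max(0, B-A-W)}] = 1 - ω(μ)α(μ)·s/(μ+s) for all s ≥ 0. -/
open MeasureTheory ProbabilityTheory Real Set Filter
open scoped ENNReal NNReal
set_option maxHeartbeats 1000000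

lemma aux_exp_Ioi {c t : ℝ} (hc : 0 < c) :
    ∫ x in Ioi t, Real.exp (-(c * x)) = Real.exp (-(c * t)) / c := by
  have := integral_Ioi_of_hasDerivAt_of_tendsto
    (f := fun x => -Real.exp (-(c * x)) / c) (f' := fun x => Real.exp (-(c * x))) (a := t) (m := 0)
    ?_ ?_ ?_ ?_
  · rw [this]; ring
  · exact (Continuous.continuousWithinAt (by continuity))
  · intro x _
    have h := (ProbabilityTheory.hasDerivAt_neg_exp_mul_exp (r := c) (x := x)).div_const c
    convert h using 1
    · rfl
    · rw [mul_div_cancel_left₀ _ hc.ne']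
  · simpa [mul_comm] using exp_neg_integrableOn_Ioi t hc
  · have h1 : Tendsto (fun x : ℝ => c * x) atTop atTop :=
      Filter.tendsto_id.const_mul_atTop hc
    have h2 : Tendsto (fun x : ℝ => Real.exp (-(c * x))) atTop (nhds 0) :=
      Real.tendsto_exp_neg_atTop_nhds_zero.comp h1
    simpa using h2.neg.div_const c
lemma aux_pdf_eq (r x : ℝ) :
    exponentialPDFReal r x = if 0 ≤ x then r * Real.exp (-(r * x)) else 0 := by
  rw [exponentialPDFReal, gammaPDFReal]
  simp only [rpow_one, Real.Gamma_one, div_one, sub_self, rpow_zero, mul_one]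

lemma aux_inner {μ s t : ℝ} (hμ : 0 < μ) (hs : 0 ≤ s) (ht : 0 ≤ t) :
    ∫ b, Real.exp (-s * max 0 (b - t)) ∂(expMeasure μ) =
      1 - s / (μ + s) * Real.exp (-(μ * t)) := by
  have hμs : 0 < μ + s := by linarith
  have hec : Continuous fun x : ℝ => Real.exp (-(μ * x)) :=
    ((continuous_const.mul continuous_id).neg).rexp
  have hgc : Continuous fun x : ℝ => Real.exp (-s * max 0 (x - t)) := by
    exact (continuous_const.mul (continuous_const.max (continuous_id.sub continuous_const))).rexp
  have hg1 : ∀ x : ℝ, Real.exp (-s * max 0 (x - t)) ≤ 1 := by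
    intro x
    rw [Real.exp_le_one_iff]
    exact mul_nonpos_of_nonpos_of_nonneg (by linarith) (le_max_left _ _)
  have hg0 : ∀ x : ℝ, 0 < Real.exp (-s * max 0 (x - t)) := fun x => Real.exp_pos _
  have hdens : expMeasure μ =
      volume.withDensity (fun x => ((exponentialPDFReal μ x).toNNReal : ℝ≥0∞)) := rfl
  rw [hdens, integral_withDensity_eq_integral_smul
    ((measurable_exponentialPDFReal μ).real_toNNReal) _]
  have hstep : ∀ x : ℝ, (exponentialPDFReal μ x).toNNReal • Real.exp (-s * max 0 (x - t)) =
      (Ici (0:ℝ)).indicator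
        (fun x => μ * Real.exp (-(μ * x)) * Real.exp (-s * max 0 (x - t))) x := by
    intro x
    rw [NNReal.smul_def, smul_eq_mul, Real.coe_toNNReal _ (exponentialPDFReal_nonneg hμ x),
      aux_pdf_eq]
    by_cases hx : 0 ≤ x <;> simp [Set.indicator_apply, hx, mem_Ici]
  rw [integral_congr_ae (Eventually.of_forall hstep), integral_indicator measurableSet_Ici,
    integral_Ici_eq_integral_Ioi, ← Ioc_union_Ioi_eq_Ioi ht,
    setIntegral_union (Ioc_disjoint_Ioi le_rfl) measurableSet_Ioi]
  · have piece1 : ∫ x in Ioc 0 t, μ * Real.exp (-(μ * x)) * Real.exp (-s * max 0 (x - t)) =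
        1 - Real.exp (-(μ * t)) := by
      rw [setIntegral_congr_fun measurableSet_Ioc
        (g := fun x => μ * Real.exp (-(μ * x)))
        (fun x hx => by
          rw [max_eq_left (sub_nonpos.2 hx.2), mul_zero, Real.exp_zero, mul_one])]
      rw [← intervalIntegral.integral_of_le ht,
        intervalIntegral.integral_eq_sub_of_hasDerivAt
          (f := fun a => -Real.exp (-(μ * a)))
          (fun x _ => ProbabilityTheory.hasDerivAt_neg_exp_mul_exp)
          (Continuous.intervalIntegrable (by continuity) 0 t)]
      simp [Real.exp_zero]
      ring
    have piece2 : ∫ x in Ioi t, μ * Real.exp (-(μ * x)) * Real.exp (-s * max 0 (x - t)) =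
        μ / (μ + s) * Real.exp (-(μ * t)) := by
      rw [setIntegral_congr_fun measurableSet_Ioi
        (g := fun x => (μ * Real.exp (s * t)) * Real.exp (-((μ + s) * x)))
        (fun x hx => by
          rw [max_eq_right (by simp only [mem_Ioi] at hx; linarith), mul_assoc, ← Real.exp_add,
            show -(μ * x) + -s * (x - t) = s * t + -((μ + s) * x) by ring,
            Real.exp_add, ← mul_assoc])]
      rw [integral_const_mul, aux_exp_Ioi hμs]
      have hE : Real.exp (s * t) * Real.exp (-((μ + s) * t)) = Real.exp (-(μ * t)) := by
        rw [← Real.exp_add]; congr 1; ring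
      field_simp
      rw [mul_comm t]
      linear_combination hE
    rw [piece1, piece2]
    field_simp
    ring
  · apply Continuous.integrableOn_Ioc
    exact (continuous_const.mul hec).mul hgc
  · apply Integrable.mono' (g := fun x => μ * Real.exp (-(μ * x)))
    · have := (exp_neg_integrableOn_Ioi t hμ).const_mul μ
      simpa [mul_comm] using this
    · exact ((continuous_const.mul hec).mul hgc).aestronglyMeasurable
    · refine Eventually.of_forall fun x => ?_
      rw [Real.norm_eq_abs, abs_of_nonneg (by positivity)]
      exact mul_le_of_le_one_right (by positivity) (hg1 x)

/-- For independent nonnegative random variables `W, A, B` with `B ~ Exp(μ)`,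
the Laplace transform of `max 0 (B - A - W)` equals
`1 - ω(μ)·α(μ)·s/(μ+s)` for all `s ≥ 0`. -/
theorem alternating_service_transform_exponential
    {Ω : Type*} [MeasurableSpace Ω] (P : Measure Ω) [IsProbabilityMeasure P]
    (W A B : Ω → ℝ) (hWm : Measurable W) (hAm : Measurable A) (hBm : Measurable B)
    (hWnn : ∀ ω, 0 ≤ W ω) (hAnn : ∀ ω, 0 ≤ A ω) (hBnn : ∀ ω, 0 ≤ B ω)
    (μ : ℝ) (hμ : 0 < μ)
    (hindep : iIndepFun ![W, A, B] P)
    (hB : Measure.map B P = expMeasure μ) :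
    ∀ s : ℝ, 0 ≤ s →
      ∫ ω, Real.exp (-s * max 0 (B ω - A ω - W ω)) ∂P =
        1 - (∫ ω, Real.exp (-μ * W ω) ∂P) * (∫ ω, Real.exp (-μ * A ω) ∂P) * s / (μ + s) := by
  intro s hs
  have hμs : 0 < μ + s := by linarith
  haveI : IsProbabilityMeasure (expMeasure μ) := isProbabilityMeasure_expMeasure hμ
  set T : Ω → ℝ := fun ω => W ω + A ω with hT
  have hTm : Measurable T := hWm.add hAm
  have hmeas : ∀ i, Measurable (![W, A, B] i) := by
    intro i; fin_cases i <;> assumption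
  have h1 : IndepFun (fun ω => (W ω, A ω)) B P := by
    have := hindep.indepFun_prodMk hmeas 0 1 2 (by decide) (by decide)
    simpa using this
  have hTB : IndepFun T B P := by
    have := h1.comp (φ := fun p : ℝ × ℝ => p.1 + p.2) (ψ := id) measurable_add measurable_id
    exact this
  have hWA : IndepFun W A P := by
    have := hindep.indepFun (i := 0) (j := 1) (by decide)
    simpa using this
  haveI : IsProbabilityMeasure (Measure.map T P) := Measure.isProbabilityMeasure_map hTm.aemeasurable
  have hmap : Measure.map (fun ω => (T ω, B ω)) P = (Measure.map T P).prod (expMeasure μ) := by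
    rw [← hB]
    exact (indepFun_iff_map_prod_eq_prod_map_map hTm.aemeasurable hBm.aemeasurable).mp hTB
  set F : ℝ × ℝ → ℝ := fun p => Real.exp (-s * max 0 (p.2 - p.1)) with hF
  have hFc : Continuous F :=
    (continuous_const.mul (continuous_const.max (continuous_snd.sub continuous_fst))).rexp
  have hF1 : ∀ p : ℝ × ℝ, F p ≤ 1 := fun p =>
    Real.exp_le_one_iff.mpr (mul_nonpos_of_nonpos_of_nonneg (by linarith) (le_max_left _ _))
  have hLHS : ∫ ω, Real.exp (-s * max 0 (B ω - A ω - W ω)) ∂P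
      = ∫ p, F p ∂((Measure.map T P).prod (expMeasure μ)) := by
    rw [← hmap, integral_map (hTm.prodMk hBm).aemeasurable hFc.aestronglyMeasurable]
    apply integral_congr_ae
    refine Eventually.of_forall fun ω => ?_
    simp only [hF, hT]
    ring_nf
  have hFint : Integrable F ((Measure.map T P).prod (expMeasure μ)) := by
    apply (integrable_const (1:ℝ)).mono' hFc.aestronglyMeasurable
    refine Eventually.of_forall fun p => ?_
    rw [Real.norm_eq_abs, abs_of_pos (Real.exp_pos _)]
    exact hF1 p
  rw [hLHS, integral_prod _ hFint]
  have hae : ∀ᵐ t ∂(Measure.map T P), 0 ≤ t := by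
    rw [ae_map_iff hTm.aemeasurable measurableSet_Ici]
    exact ae_of_all _ fun ω => add_nonneg (hWnn ω) (hAnn ω)
  have hinner : ∀ᵐ t ∂(Measure.map T P),
      (∫ b, F (t, b) ∂(expMeasure μ)) = 1 - s / (μ + s) * Real.exp (-(μ * t)) := by
    filter_upwards [hae] with t ht
    exact aux_inner hμ hs ht
  rw [integral_congr_ae hinner]
  have hec : Continuous fun t : ℝ => Real.exp (-(μ * t)) :=
    ((continuous_const.mul continuous_id).neg).rexp
  have hintexp : Integrable (fun t => Real.exp (-(μ * t))) (Measure.map T P) := by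
    apply (integrable_const (1:ℝ)).mono' hec.aestronglyMeasurable
    filter_upwards [hae] with t ht
    rw [Real.norm_eq_abs, abs_of_pos (Real.exp_pos _)]
    exact Real.exp_le_one_iff.mpr (by nlinarith)
  rw [integral_sub (integrable_const 1) (hintexp.const_mul _), integral_const, probReal_univ,
    integral_const_mul]
  have hTint : ∫ t, Real.exp (-(μ * t)) ∂(Measure.map T P) =
      (∫ ω, Real.exp (-μ * W ω) ∂P) * (∫ ω, Real.exp (-μ * A ω) ∂P) := by
    rw [integral_map hTm.aemeasurable (hec.aestronglyMeasurable)]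
    have hprod : ∀ ω, Real.exp (-(μ * T ω)) = Real.exp (-μ * W ω) * Real.exp (-μ * A ω) := by
      intro ω; rw [← Real.exp_add]; congr 1; simp only [hT]; ring
    rw [integral_congr_ae (Eventually.of_forall hprod)]
    have hme : Measurable fun x : ℝ => Real.exp (-μ * x) :=
      (measurable_id.const_mul (-μ)).exp
    have := (hWA.comp (φ := fun x => Real.exp (-μ * x)) (ψ := fun x => Real.exp (-μ * x))
      hme hme).integral_mul_eq_mul_integral
      ((hme.comp hWm).aestronglyMeasurable) ((hme.comp hAm).aestronglyMeasurable)
    simpa [Function.comp] using this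
  rw [hTint]
  simp only [ENNReal.toReal_one, smul_eq_mul, mul_one]
  field_simp
end

section
/- Let B have an Erlang-n distribution with rate μ (sum of n i.i.d. Exp(μ) variables), independent of nonnegative random variables W and A which are independent of each other. Set φ(s) = E[e^{-sW}]·E[e^{-sA}]. Then P[B < W + A] = 1 - Σ_{i=0}^{n-1} ((-μ)^i / i!)·φ^{(i)}(μ). -/
open MeasureTheory ProbabilityTheory Real Finset

section Aux

open Set Filter

/-- Bound `y^k * exp(-(c*y)) ≤ k! * (2/c)^k` for `y ≥ 0`, `c > 0`. -/
lemma pow_mul_exp_neg_le {k : ℕ} {c y : ℝ} (hc : 0 < c) (hy : 0 ≤ y) :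
    y ^ k * Real.exp (-(c * y)) ≤ (k.factorial : ℝ) * (2 / c) ^ k := by
  have hx : 0 ≤ (c / 2) * y := by positivity
  have h1 : ((c / 2) * y) ^ k / (k.factorial : ℝ) ≤ Real.exp ((c / 2) * y) := by
    calc ((c / 2) * y) ^ k / (k.factorial : ℝ)
        ≤ ∑ i ∈ Finset.range (k + 1), ((c / 2) * y) ^ i / (i.factorial : ℝ) :=
          Finset.single_le_sum (f := fun i => ((c / 2) * y) ^ i / (i.factorial : ℝ))
            (fun i _ => by positivity) (Finset.self_mem_range_succ k)
      _ ≤ _ := Real.sum_le_exp_of_nonneg hx _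
  have hfac : (0:ℝ) < (k.factorial : ℝ) := by positivity
  have key : y ^ k = ((c / 2) * y) ^ k * (2 / c) ^ k := by
    rw [← mul_pow]
    congr 1
    field_simp
  calc y ^ k * Real.exp (-(c * y))
      = ((c / 2) * y) ^ k / (k.factorial : ℝ) * Real.exp (-(c * y)) *
        ((k.factorial : ℝ) * (2 / c) ^ k) := by
        rw [key]; field_simp
    _ ≤ Real.exp ((c / 2) * y) * Real.exp (-(c * y)) * ((k.factorial : ℝ) * (2 / c) ^ k) := by
        apply mul_le_mul_of_nonneg_right _ (by positivity)
        exact mul_le_mul_of_nonneg_right h1 (Real.exp_nonneg _)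
    _ = Real.exp (-(c / 2 * y)) * ((k.factorial : ℝ) * (2 / c) ^ k) := by
        rw [← Real.exp_add]; ring_nf
    _ ≤ 1 * ((k.factorial : ℝ) * (2 / c) ^ k) := by
        apply mul_le_mul_of_nonneg_right _ (by positivity)
        exact Real.exp_le_one_iff.mpr (by nlinarith)
    _ = _ := one_mul _

/-- Integrability of `(-Y)^k * exp(-(s*Y))` for nonnegative `Y` on a probability space. -/
lemma integrable_pow_mul_exp {Ω : Type*} [MeasurableSpace Ω] (P : Measure Ω)
    [IsProbabilityMeasure P] {Y : Ω → ℝ} (hY : Measurable Y) (hYnn : ∀ ω, 0 ≤ Y ω)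
    (k : ℕ) {s : ℝ} (hs : 0 < s) :
    Integrable (fun ω => (-Y ω) ^ k * Real.exp (-(s * Y ω))) P := by
  refine Integrable.mono' (integrable_const ((k.factorial : ℝ) * (2 / s) ^ k)) ?_ ?_
  · exact ((hY.neg.pow_const k).mul ((hY.const_mul s).neg.exp)).aestronglyMeasurable
  · filter_upwards with ω
    rw [norm_mul, norm_pow, norm_neg, Real.norm_eq_abs, Real.norm_eq_abs,
      abs_of_nonneg (hYnn ω), Real.abs_exp]
    exact pow_mul_exp_neg_le hs (hYnn ω)

/-- Derivative of the partial sums of the exponential series against `exp(-(μ t))`. -/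
lemma hasDerivAt_partial_sum (μ : ℝ) (m : ℕ) (t : ℝ) :
    HasDerivAt (fun t => ∑ i ∈ Finset.range (m + 1),
        Real.exp (-(μ * t)) * (μ * t) ^ i / (i.factorial : ℝ))
      (-(μ ^ (m + 1) * t ^ m * Real.exp (-(μ * t)) / (m.factorial : ℝ))) t := by
  induction m with
  | zero =>
      have h : HasDerivAt (fun t => Real.exp (-(μ * t))) (Real.exp (-(μ * t)) * -μ) t := by
        simpa using (((hasDerivAt_id t).const_mul μ).neg).exp
      have h2 : HasDerivAt (fun t => ∑ i ∈ Finset.range 1,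
          Real.exp (-(μ * t)) * (μ * t) ^ i / (i.factorial : ℝ)) (Real.exp (-(μ * t)) * -μ) t := by
        simpa using h
      convert h2 using 1
      simp; ring
  | succ m ih =>
      have h1 : HasDerivAt (fun t => Real.exp (-(μ * t))) (Real.exp (-(μ * t)) * -μ) t := by
        simpa using (((hasDerivAt_id t).const_mul μ).neg).exp
      have h2 : HasDerivAt (fun t => (μ * t) ^ (m + 1))
          ((↑(m + 1) : ℝ) * (μ * t) ^ m * μ) t := by
        simpa using ((hasDerivAt_id t).const_mul μ).fun_pow (m + 1)
      have hterm : HasDerivAt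
          (fun t => Real.exp (-(μ * t)) * (μ * t) ^ (m + 1) / ((m + 1).factorial : ℝ))
          (μ ^ (m + 1) * t ^ m * Real.exp (-(μ * t)) / (m.factorial : ℝ) -
            μ ^ (m + 2) * t ^ (m + 1) * Real.exp (-(μ * t)) / ((m + 1).factorial : ℝ)) t := by
        have := (h1.fun_mul h2).div_const ((m + 1).factorial : ℝ)
        refine this.congr_deriv ?_
        have hfac : ((m + 1).factorial : ℝ) = ((m : ℝ) + 1) * (m.factorial : ℝ) := by
          rw [Nat.factorial_succ]; push_cast; ring
        have hfpos : (0:ℝ) < (m.factorial : ℝ) := by positivity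
        rw [hfac]
        rw [mul_pow, mul_pow]
        field_simp
        push_cast
        ring
      have := ih.fun_add hterm
      have heq : (fun t => ∑ i ∈ Finset.range (m + 1 + 1),
          Real.exp (-(μ * t)) * (μ * t) ^ i / (i.factorial : ℝ)) =
          fun t => (∑ i ∈ Finset.range (m + 1),
            Real.exp (-(μ * t)) * (μ * t) ^ i / (i.factorial : ℝ)) +
            Real.exp (-(μ * t)) * (μ * t) ^ (m + 1) / ((m + 1).factorial : ℝ) := by
        funext t; rw [Finset.sum_range_succ]
      rw [heq]
      refine this.congr_deriv ?_
      ring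

/-- The Erlang CDF formula. -/
lemma gammaMeasure_Iio_toReal (n : ℕ) (hn : 1 ≤ n) {μ : ℝ} (hμ : 0 < μ) {t : ℝ} (ht : 0 ≤ t) :
    ((gammaMeasure n μ) (Set.Iio t)).toReal =
      1 - ∑ i ∈ Finset.range n, Real.exp (-(μ * t)) * (μ * t) ^ i / (i.factorial : ℝ) := by
  obtain ⟨m, rfl⟩ := Nat.exists_eq_add_of_le hn
  set n := 1 + m with hn_def
  have hmn : n = m + 1 := by omega
  -- the density on [0, ∞)
  have hpdf : ∀ x : ℝ, 0 ≤ x → gammaPDFReal n μ x =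
      μ ^ n * x ^ m * Real.exp (-(μ * x)) / (m.factorial : ℝ) := by
    intro x hx
    rw [gammaPDFReal, if_pos hx]
    have h1 : (μ : ℝ) ^ (n : ℝ) = μ ^ n := Real.rpow_natCast μ n
    have h2 : x ^ ((n : ℝ) - 1) = x ^ m := by
      have : ((n : ℝ) - 1) = (m : ℝ) := by rw [hmn]; push_cast; ring
      rw [this, Real.rpow_natCast]
    have h3 : Real.Gamma (n : ℝ) = (m.factorial : ℝ) := by
      have : ((n : ℕ) : ℝ) = (m : ℝ) + 1 := by rw [hmn]; push_cast; ring
      rw [this, Real.Gamma_nat_eq_factorial]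
    rw [h1, h2, h3]; ring
  -- FTC computation
  have hderiv : ∀ x ∈ Set.uIcc 0 t, HasDerivAt
      (fun t => -(∑ i ∈ Finset.range n,
        Real.exp (-(μ * t)) * (μ * t) ^ i / (i.factorial : ℝ)))
      (μ ^ n * x ^ m * Real.exp (-(μ * x)) / (m.factorial : ℝ)) x := by
    intro x _
    have := (hasDerivAt_partial_sum μ m x).fun_neg
    rw [hmn]
    refine this.congr_deriv ?_
    ring
  have hcont : Continuous fun x : ℝ => μ ^ n * x ^ m * Real.exp (-(μ * x)) / (m.factorial : ℝ) := by
    fun_prop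
  have hFTC : ∫ x in (0:ℝ)..t, μ ^ n * x ^ m * Real.exp (-(μ * x)) / (m.factorial : ℝ) =
      1 - ∑ i ∈ Finset.range n, Real.exp (-(μ * t)) * (μ * t) ^ i / (i.factorial : ℝ) := by
    rw [intervalIntegral.integral_eq_sub_of_hasDerivAt hderiv
      (hcont.intervalIntegrable 0 t)]
    have hzero : ∑ i ∈ Finset.range n, Real.exp (-(μ * 0)) * (μ * 0) ^ i / (i.factorial : ℝ)
        = 1 := by
      rw [Finset.sum_eq_single_of_mem 0 (Finset.mem_range.mpr (by omega))]
      · norm_num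
      · intro i _ hi
        simp [zero_pow hi]
    rw [hzero]; ring
  -- relate to gammaMeasure
  have hsplit : (gammaMeasure n μ) (Set.Iio t) = ∫⁻ x in Set.Ico 0 t, gammaPDF n μ x := by
    rw [gammaMeasure, withDensity_apply _ measurableSet_Iio,
      ← Set.Iio_union_Ico_eq_Iio ht, lintegral_union measurableSet_Ico
        (by simp [Set.disjoint_left]; intro a ha h0; linarith)]
    have : ∫⁻ x in Set.Iio (0:ℝ), gammaPDF n μ x = 0 :=
      lintegral_gammaPDF_of_nonpos le_rfl
    rw [this, zero_add]
  have hInt : ∫ x in Set.Ico (0:ℝ) t, gammaPDFReal n μ x =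
      (∫⁻ x in Set.Ico 0 t, gammaPDF n μ x).toReal := by
    rw [integral_eq_lintegral_of_nonneg_ae
      (ae_of_all _ fun x => gammaPDFReal_nonneg (by positivity) hμ x)
      (measurable_gammaPDFReal n μ).aestronglyMeasurable.restrict]
    rfl
  rw [hsplit, ← hInt]
  have : ∫ x in Set.Ico (0:ℝ) t, gammaPDFReal n μ x =
      ∫ x in (0:ℝ)..t, μ ^ n * x ^ m * Real.exp (-(μ * x)) / (m.factorial : ℝ) := by
    rw [intervalIntegral.integral_of_le ht, MeasureTheory.integral_Ico_eq_integral_Ioo,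
      ← MeasureTheory.integral_Ioc_eq_integral_Ioo]
    refine setIntegral_congr_fun measurableSet_Ioc fun x hx => ?_
    exact hpdf x (le_of_lt hx.1)
  rw [this, hFTC]

end Aux

/-- If `B ~ Erlang(n, μ)` (i.e. Gamma with integer shape `n` and rate `μ`) is independent of
the independent nonnegative random variables `W` and `A`, and
`φ(s) = E[e^{-sW}]·E[e^{-sA}]`, then `P[B < W + A] = 1 - ∑_{i=0}^{n-1} ((-μ)^i/i!)·φ^{(i)}(μ)`. -/
theorem prob_no_wait_erlang
    {Ω : Type*} [MeasurableSpace Ω] (P : Measure Ω) [IsProbabilityMeasure P]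
    (W A B : Ω → ℝ) (hWm : Measurable W) (hAm : Measurable A) (hBm : Measurable B)
    (hWnn : ∀ ω, 0 ≤ W ω) (hAnn : ∀ ω, 0 ≤ A ω)
    (n : ℕ) (hn : 1 ≤ n) (μ : ℝ) (hμ : 0 < μ)
    (hindep : iIndepFun ![W, A, B] P)
    (hB : Measure.map B P = gammaMeasure n μ) :
    (P {ω | B ω < W ω + A ω}).toReal =
      1 - ∑ i ∈ Finset.range n, (-μ) ^ i / (Nat.factorial i) *
        iteratedDeriv i
          (fun s => (∫ ω, Real.exp (-s * W ω) ∂P) * ∫ ω, Real.exp (-s * A ω) ∂P) μ := by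
  classical
  set Y : Ω → ℝ := fun ω => W ω + A ω with hY_def
  have hYm : Measurable Y := hWm.add hAm
  have hYnn : ∀ ω, 0 ≤ Y ω := fun ω => add_nonneg (hWnn ω) (hAnn ω)
  have hmeas_all : ∀ i, Measurable (![W, A, B] i) := by
    intro i; fin_cases i <;> simpa
  have hYB : IndepFun Y B P := by
    have h3 := hindep.indepFun_prodMk hmeas_all 0 1 2 (by decide) (by decide)
    exact h3.comp (measurable_fst.add measurable_snd) measurable_id
  have hWA : IndepFun W A P := hindep.indepFun (show (0 : Fin 3) ≠ 1 by decide)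
  haveI hPB : IsProbabilityMeasure (gammaMeasure n μ) :=
    isProbabilityMeasure_gammaMeasure (Nat.cast_pos.mpr hn) hμ
  haveI hmapY : IsProbabilityMeasure (Measure.map Y P) :=
    Measure.isProbabilityMeasure_map hYm.aemeasurable
  haveI hmapB : IsProbabilityMeasure (Measure.map B P) :=
    Measure.isProbabilityMeasure_map hBm.aemeasurable
  have hGm : Measurable fun y : ℝ => gammaMeasure n μ (Set.Iio y) :=
    Monotone.measurable fun a b hab => measure_mono (Set.Iio_subset_Iio hab)
  have hset : MeasurableSet {p : ℝ × ℝ | p.2 < p.1} :=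
    measurableSet_lt measurable_snd measurable_fst
  have step1 : P {ω | B ω < Y ω} = ∫⁻ ω, gammaMeasure n μ (Set.Iio (Y ω)) ∂P := by
    have hmap := (indepFun_iff_map_prod_eq_prod_map_map hYm.aemeasurable hBm.aemeasurable).mp hYB
    calc P {ω | B ω < Y ω}
        = Measure.map (fun ω => (Y ω, B ω)) P {p : ℝ × ℝ | p.2 < p.1} := by
          rw [Measure.map_apply (hYm.prodMk hBm) hset]; rfl
      _ = (Measure.map Y P).prod (Measure.map B P) {p : ℝ × ℝ | p.2 < p.1} := by rw [hmap]
      _ = ∫⁻ y, Measure.map B P (Prod.mk y ⁻¹' {p : ℝ × ℝ | p.2 < p.1}) ∂(Measure.map Y P) :=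
          Measure.prod_apply hset
      _ = ∫⁻ y, gammaMeasure n μ (Set.Iio y) ∂(Measure.map Y P) := by rw [hB]; rfl
      _ = ∫⁻ ω, gammaMeasure n μ (Set.Iio (Y ω)) ∂P := lintegral_map hGm hYm
  have step2 : (P {ω | B ω < Y ω}).toReal =
      ∫ ω, (gammaMeasure n μ (Set.Iio (Y ω))).toReal ∂P := by
    rw [step1]
    exact (integral_toReal ((hGm.comp hYm).aemeasurable)
      (ae_of_all _ fun ω => measure_lt_top _ _)).symm
  have step3 : ∀ ω, (gammaMeasure n μ (Set.Iio (Y ω))).toReal =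
      1 - ∑ i ∈ Finset.range n, Real.exp (-(μ * Y ω)) * (μ * Y ω) ^ i / (i.factorial : ℝ) :=
    fun ω => gammaMeasure_Iio_toReal n hn hμ (hYnn ω)
  have hfac1 : ∀ i : ℕ, (1:ℝ) ≤ (i.factorial : ℝ) := fun i => by
    exact_mod_cast i.factorial_pos
  have hint : ∀ i : ℕ,
      Integrable (fun ω => Real.exp (-(μ * Y ω)) * (μ * Y ω) ^ i / (i.factorial : ℝ)) P := by
    intro i
    refine Integrable.mono' (integrable_const ((i.factorial : ℝ) * 2 ^ i)) ?_ ?_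
    · exact ((((hYm.const_mul μ).neg.exp).mul
        ((hYm.const_mul μ).pow_const i)).div_const _).aestronglyMeasurable
    · filter_upwards with ω
      have h0 : 0 ≤ μ * Y ω := mul_nonneg hμ.le (hYnn ω)
      rw [Real.norm_eq_abs, abs_div, abs_mul, Real.abs_exp,
        abs_of_nonneg (pow_nonneg h0 i), Nat.abs_cast]
      have hb := pow_mul_exp_neg_le (k := i) (c := 1) one_pos h0
      norm_num at hb
      calc Real.exp (-(μ * Y ω)) * (μ * Y ω) ^ i / (i.factorial : ℝ)
          ≤ Real.exp (-(μ * Y ω)) * (μ * Y ω) ^ i :=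
            div_le_self (by positivity) (hfac1 i)
        _ = (μ * Y ω) ^ i * Real.exp (-(1 * (μ * Y ω))) := by rw [one_mul]; ring
        _ ≤ _ := by rw [one_mul]; exact hb
  have step4 : ∫ ω, (gammaMeasure n μ (Set.Iio (Y ω))).toReal ∂P =
      1 - ∑ i ∈ Finset.range n,
        ∫ ω, Real.exp (-(μ * Y ω)) * (μ * Y ω) ^ i / (i.factorial : ℝ) ∂P := by
    simp_rw [step3]
    rw [integral_sub (integrable_const 1) (integrable_finset_sum _ fun i _ => hint i),
      integral_const, probReal_univ, smul_eq_mul, mul_one,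
      integral_finset_sum _ fun i _ => hint i]
  -- derivative machinery
  have hasD : ∀ (k : ℕ) {s : ℝ}, 0 < s →
      HasDerivAt (fun s => ∫ ω, (-Y ω) ^ k * Real.exp (-(s * Y ω)) ∂P)
        (∫ ω, (-Y ω) ^ (k + 1) * Real.exp (-(s * Y ω)) ∂P) s := by
    intro k s hs
    have hmeas : ∀ x : ℝ, AEStronglyMeasurable (fun ω => (-Y ω) ^ k * Real.exp (-(x * Y ω))) P :=
      fun x => ((hYm.neg.pow_const k).mul ((hYm.const_mul x).neg.exp)).aestronglyMeasurable
    have hmeas' : AEStronglyMeasurable (fun ω => (-Y ω) ^ (k + 1) * Real.exp (-(s * Y ω))) P :=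
      ((hYm.neg.pow_const (k + 1)).mul ((hYm.const_mul s).neg.exp)).aestronglyMeasurable
    refine (hasDerivAt_integral_of_dominated_loc_of_deriv_le (s := Metric.ball s (s / 2))
      (F' := fun x ω => (-Y ω) ^ (k + 1) * Real.exp (-(x * Y ω))) (Metric.ball_mem_nhds s (by positivity))
      (Filter.Eventually.of_forall hmeas) (integrable_pow_mul_exp P hYm hYnn k hs) hmeas'
      ?_ (integrable_const (((k + 1).factorial : ℝ) * (2 / (s / 2)) ^ (k + 1))) ?_).2
    · filter_upwards with ω
      intro x hx
      have hxs : s / 2 ≤ x := by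
        have h := Metric.mem_ball.mp hx
        rw [Real.dist_eq] at h
        have := abs_lt.mp h
        linarith [this.1]
      rw [norm_mul, norm_pow, norm_neg, Real.norm_eq_abs, Real.norm_eq_abs,
        abs_of_nonneg (hYnn ω), Real.abs_exp]
      calc (Y ω) ^ (k + 1) * Real.exp (-(x * Y ω))
          ≤ (Y ω) ^ (k + 1) * Real.exp (-(s / 2 * Y ω)) := by
            have hmono : Real.exp (-(x * Y ω)) ≤ Real.exp (-(s / 2 * Y ω)) :=
              Real.exp_le_exp.mpr (by linarith [mul_le_mul_of_nonneg_right hxs (hYnn ω)])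
            exact mul_le_mul_of_nonneg_left hmono (pow_nonneg (hYnn ω) _)
        _ ≤ _ := pow_mul_exp_neg_le (by positivity) (hYnn ω)
    · filter_upwards with ω
      intro x hx
      have h1 : HasDerivAt (fun x => Real.exp (-(x * Y ω)))
          (Real.exp (-(x * Y ω)) * -(Y ω)) x := by
        simpa using (((hasDerivAt_id x).mul_const (Y ω)).neg).exp
      have h2 := h1.const_mul ((-Y ω) ^ k)
      refine h2.congr_deriv ?_
      rw [pow_succ]; ring
  have hiter : ∀ (i : ℕ) (s : ℝ), 0 < s →
      iteratedDeriv i (fun s => ∫ ω, Real.exp (-(s * Y ω)) ∂P) s =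
        ∫ ω, (-Y ω) ^ i * Real.exp (-(s * Y ω)) ∂P := by
    intro i
    induction i with
    | zero => intro s hs; simp [iteratedDeriv_zero]
    | succ i ih =>
        intro s hs
        rw [iteratedDeriv_succ]
        have hev : iteratedDeriv i (fun s => ∫ ω, Real.exp (-(s * Y ω)) ∂P) =ᶠ[nhds s]
            fun s => ∫ ω, (-Y ω) ^ i * Real.exp (-(s * Y ω)) ∂P :=
          Filter.eventually_of_mem (isOpen_Ioi.mem_nhds hs) fun x hx => ih x hx
        rw [hev.deriv_eq]
        exact (hasD i hs).deriv
  have hmul : ∀ s : ℝ, 0 < s →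
      (∫ ω, Real.exp (-s * W ω) ∂P) * (∫ ω, Real.exp (-s * A ω) ∂P) =
        ∫ ω, Real.exp (-(s * Y ω)) ∂P := by
    intro s hs
    have hWA' : IndepFun (fun ω => Real.exp (-s * W ω)) (fun ω => Real.exp (-s * A ω)) P :=
      hWA.comp (Real.measurable_exp.comp (measurable_id.const_mul (-s)))
        (Real.measurable_exp.comp (measurable_id.const_mul (-s)))
    have m1 : AEStronglyMeasurable (fun ω => Real.exp (-s * W ω)) P :=
      (Real.measurable_exp.comp (hWm.const_mul (-s))).aestronglyMeasurable
    have m2 : AEStronglyMeasurable (fun ω => Real.exp (-s * A ω)) P :=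
      (Real.measurable_exp.comp (hAm.const_mul (-s))).aestronglyMeasurable
    calc (∫ ω, Real.exp (-s * W ω) ∂P) * (∫ ω, Real.exp (-s * A ω) ∂P)
        = ∫ ω, ((fun ω => Real.exp (-s * W ω)) * fun ω => Real.exp (-s * A ω)) ω ∂P :=
          (IndepFun.integral_mul_eq_mul_integral hWA' m1 m2).symm
      _ = ∫ ω, Real.exp (-(s * Y ω)) ∂P := by
          refine integral_congr_ae (ae_of_all _ fun ω => ?_)
          simp only [Pi.mul_apply]
          rw [← Real.exp_add]
          congr 1
          simp only [hY_def]
          ring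
  have hfinal : ∀ i : ℕ,
      ∫ ω, Real.exp (-(μ * Y ω)) * (μ * Y ω) ^ i / (i.factorial : ℝ) ∂P =
      (-μ) ^ i / (i.factorial : ℝ) * iteratedDeriv i
        (fun s => (∫ ω, Real.exp (-s * W ω) ∂P) * ∫ ω, Real.exp (-s * A ω) ∂P) μ := by
    intro i
    have hEq : (fun s => (∫ ω, Real.exp (-s * W ω) ∂P) * ∫ ω, Real.exp (-s * A ω) ∂P)
        =ᶠ[nhds μ] fun s => ∫ ω, Real.exp (-(s * Y ω)) ∂P :=
      Filter.eventually_of_mem (isOpen_Ioi.mem_nhds hμ) fun x hx => hmul x hx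
    rw [Filter.EventuallyEq.iteratedDeriv_eq i hEq, hiter i μ hμ, ← integral_const_mul]
    refine integral_congr_ae (ae_of_all _ fun ω => ?_)
    have h2 : (-μ) ^ i * (-Y ω) ^ i = (μ * Y ω) ^ i := by
      rw [← mul_pow, neg_mul_neg]
    calc Real.exp (-(μ * Y ω)) * (μ * Y ω) ^ i / (i.factorial : ℝ)
        = (-μ) ^ i * (-Y ω) ^ i * Real.exp (-(μ * Y ω)) / (i.factorial : ℝ) := by
          rw [h2]; ring
      _ = (-μ) ^ i / (i.factorial : ℝ) * ((-Y ω) ^ i * Real.exp (-(μ * Y ω))) := by ring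
  have hLHS : P {ω | B ω < W ω + A ω} = P {ω | B ω < Y ω} := rfl
  rw [hLHS, step2, step4]
  congr 1
  exact Finset.sum_congr rfl fun i _ => hfinal i
end

section
/- In the coupled alternating and non-alternating systems driven by the same sequences {A_i}, {B_i} and identical initial state, the departure times satisfy D^A_i ≥ D^{NA}_i and the service-availability times satisfy H^A_i ≥ H^{NA}_i for all i ≥ 1, where in the alternating system D^A_i = H^A_{i-1} + A_i and H^A_i = max(D^A_i, D^A_{i-1} + B_i), while in the non-alternating system D^{NA}_i = min(H^{NA}_{i-1}, D^{NA}_{i-1} + B_i) + A_i and H^{NA}_i = max(D^{NA}_i, max(H^{NA}_{i-1}, D^{NA}_{i-1} + B_i)), with initial conditions D^A_1 = D^{NA}_1 = A_1 and H^A_1 = H^{NA}_1 = max(A_1, B_1). -/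
/-- Lemma 1 (sample-path coupling): with the same realized service times `A_i` and
preparation times `B_i` and the same initial state, the departure times and
service-availability times of the alternating system dominate those of the
non-alternating system: `D^A_i ≥ D^{NA}_i` and `H^A_i ≥ H^{NA}_i` for all `i ≥ 1`. -/
theorem coupled_departure_times_ordered
    (A B : ℕ → ℝ) (hA : ∀ i, 0 ≤ A i) (hB : ∀ i, 0 ≤ B i)
    (DA HA DN HN : ℕ → ℝ)
    (hDA1 : DA 1 = A 1) (hDN1 : DN 1 = A 1)
    (hHA1 : HA 1 = max (A 1) (B 1)) (hHN1 : HN 1 = max (A 1) (B 1))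
    (hDA : ∀ i, 2 ≤ i → DA i = HA (i - 1) + A i)
    (hHA : ∀ i, 2 ≤ i → HA i = max (DA i) (DA (i - 1) + B i))
    (hDN : ∀ i, 2 ≤ i → DN i = min (HN (i - 1)) (DN (i - 1) + B i) + A i)
    (hHN : ∀ i, 2 ≤ i → HN i = max (DN i) (max (HN (i - 1)) (DN (i - 1) + B i))) :
    ∀ i, 1 ≤ i → DN i ≤ DA i ∧ HN i ≤ HA i := by
  intro i hi
  induction i, hi using Nat.le_induction with
  | base => exact ⟨by rw [hDN1, hDA1], by rw [hHN1, hHA1]⟩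
  | succ n hn ih =>
    have h2 : 2 ≤ n + 1 := by omega
    have hsub : n + 1 - 1 = n := by omega
    obtain ⟨ihD, ihH⟩ := ih
    have hDle : DN (n+1) ≤ DA (n+1) := by
      rw [hDN _ h2, hDA _ h2, hsub]
      have : min (HN n) (DN n + B (n+1)) ≤ HA n :=
        le_trans (min_le_left _ _) ihH
      linarith
    refine ⟨hDle, ?_⟩
    rw [hHN _ h2, hHA _ h2, hsub]
    have h1 : HN n ≤ DA (n+1) := by
      rw [hDA _ h2, hsub]; have := hA (n+1); linarith
    have h3 : DN n + B (n+1) ≤ DA n + B (n+1) := by linarith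
    refine max_le (le_max_of_le_left hDle) (max_le ?_ ?_)
    · exact le_max_of_le_left h1
    · exact le_max_of_le_right h3
end

section
/- Under the coupling of Lemma 1, the throughputs satisfy θ^A = lim_{i→∞} i/D^A_i ≤ lim_{i→∞} i/D^{NA}_i = θ^{NA} whenever the limits exist, and consequently the stationary mean waiting times satisfy E[W^A] ≥ E[W^{NA}], since θ = 1/(E[W] + E[A]) in both systems. -/
open Filter

/-- Under the coupling of Lemma 1 (so that `D^{NA}_i ≤ D^A_i` for all `i`), the throughputs
`θ = lim i/D_i` satisfy `θ^A ≤ θ^{NA}` whenever the limits exist; consequently, since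
`θ·(E[W] + E[A]) = 1` in both systems, the mean waiting times satisfy
`E[W^{NA}] ≤ E[W^A]`. -/
theorem throughput_ordered_and_mean_waiting_times_ordered
    (DA DN : ℕ → ℝ)
    (hle : ∀ i, DN i ≤ DA i)
    (hpos : ∀ i, 1 ≤ i → 0 < DN i)
    (θA θN EWA EWN EA : ℝ)
    (hθA : Tendsto (fun i : ℕ => (i : ℝ) / DA i) atTop (nhds θA))
    (hθN : Tendsto (fun i : ℕ => (i : ℝ) / DN i) atTop (nhds θN))
    (hθApos : 0 < θA)
    (hA : θA * (EWA + EA) = 1)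
    (hN : θN * (EWN + EA) = 1) :
    θA ≤ θN ∧ EWN ≤ EWA := by
  have hθAN : θA ≤ θN := by
    refine le_of_tendsto_of_tendsto hθA hθN ?_
    filter_upwards [eventually_ge_atTop 1] with i hi
    have h1 : 0 < DN i := hpos i hi
    have h2 : 0 < DA i := lt_of_lt_of_le h1 (hle i)
    exact div_le_div_of_nonneg_left (by positivity) h1 (hle i)
  refine ⟨hθAN, ?_⟩
  have hθNpos : 0 < θN := lt_of_lt_of_le hθApos hθAN
  have h1 : EWA + EA = 1 / θA := by field_simp; linarith
  have h2 : EWN + EA = 1 / θN := by field_simp; linarith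
  have := one_div_le_one_div_of_le hθApos hθAN
  linarith
end
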